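/- A closed model category C is right proper if and only if for every weak equivalence g: X→Y in C, the Quillen adjunction (g_*, g^!): (C↓X) → (C↓Y) is a Quillen equivalence. -/

import Mathlib

open CategoryTheory CategoryTheory.Limits

universe v u v' u'

/-- `f` is a retract of `g` in the arrow category. -/
def IsRetractOfArrow {C : Type u} [Category.{v} C] {A B A' B' : C}
    (f : A ⟶ B) (g : A' ⟶ B') : Prop :=
  ∃ (i : Arrow.mk f ⟶ Arrow.mk g) (r : Arrow.mk g ⟶ Arrow.mk f), i ≫ r = 𝟙 (Arrow.mk f)

/-- A (closed) model structure on a category `C`, in the sense of Quillen: three classes of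
morphisms (cofibrations, fibrations, weak equivalences) satisfying the two-out-of-three
axiom, closure under retracts, the lifting axioms and the factorization axioms. -/
structure ModelStruct (C : Type u) [Category.{v} C] : Type (max u v) where
  cof : MorphismProperty C
  fib : MorphismProperty C
  weq : MorphismProperty C
  weq_comp : ∀ {X Y Z : C} (f : X ⟶ Y) (g : Y ⟶ Z), weq f → weq g → weq (f ≫ g)
  weq_cancel_left : ∀ {X Y Z : C} (f : X ⟶ Y) (g : Y ⟶ Z), weq f → weq (f ≫ g) → weq g
  weq_cancel_right : ∀ {X Y Z : C} (f : X ⟶ Y) (g : Y ⟶ Z), weq g → weq (f ≫ g) → weq f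
  cof_retract : ∀ {A B A' B' : C} {f : A ⟶ B} {g : A' ⟶ B'},
    IsRetractOfArrow f g → cof g → cof f
  fib_retract : ∀ {A B A' B' : C} {f : A ⟶ B} {g : A' ⟶ B'},
    IsRetractOfArrow f g → fib g → fib f
  weq_retract : ∀ {A B A' B' : C} {f : A ⟶ B} {g : A' ⟶ B'},
    IsRetractOfArrow f g → weq g → weq f
  lifting_cof_trivFib : ∀ {A B X Y : C} (i : A ⟶ B) (p : X ⟶ Y),
    cof i → fib p → weq p → HasLiftingProperty i p
  lifting_trivCof_fib : ∀ {A B X Y : C} (i : A ⟶ B) (p : X ⟶ Y),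
    cof i → weq i → fib p → HasLiftingProperty i p
  factor_cof_trivFib : ∀ {X Y : C} (f : X ⟶ Y),
    ∃ (Z : C) (i : X ⟶ Z) (p : Z ⟶ Y), cof i ∧ fib p ∧ weq p ∧ i ≫ p = f
  factor_trivCof_fib : ∀ {X Y : C} (f : X ⟶ Y),
    ∃ (Z : C) (i : X ⟶ Z) (p : Z ⟶ Y), cof i ∧ weq i ∧ fib p ∧ i ≫ p = f

variable {C : Type u} [Category.{v} C]

/-- An object is cofibrant if the unique map from the initial object to it is a cofibration. -/
def ModelStruct.Cofibrant [HasInitial C] (M : ModelStruct C) (A : C) : Prop :=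
  M.cof (initial.to A)

/-- An object is fibrant if the unique map from it to the terminal object is a fibration. -/
def ModelStruct.Fibrant [HasTerminal C] (M : ModelStruct C) (A : C) : Prop :=
  M.fib (terminal.from A)

/-- The induced model structure on the coslice category `(X ↓ C)`: a morphism is a
cofibration, fibration or weak equivalence iff its underlying morphism in `C` is one. -/
def ModelStruct.under (M : ModelStruct C) (X : C) : ModelStruct (Under X) where
  cof _ _ f := M.cof f.right
  fib _ _ f := M.fib f.right
  weq _ _ f := M.weq f.right
  weq_comp f g hf hg := by simpa using M.weq_comp f.right g.right hf hg
  weq_cancel_left f g hf hfg := M.weq_cancel_left f.right g.right hf (by simpa using hfg)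
  weq_cancel_right f g hg hfg := M.weq_cancel_right f.right g.right hg (by simpa using hfg)
  cof_retract := fun ⟨i, r, hir⟩ hg => M.cof_retract
    ⟨(Under.forget X).mapArrow.map i, (Under.forget X).mapArrow.map r,
      by erw [← CategoryTheory.Functor.map_comp, hir, CategoryTheory.Functor.map_id]; rfl⟩ hg
  fib_retract := fun ⟨i, r, hir⟩ hg => M.fib_retract
    ⟨(Under.forget X).mapArrow.map i, (Under.forget X).mapArrow.map r,
      by erw [← CategoryTheory.Functor.map_comp, hir, CategoryTheory.Functor.map_id]; rfl⟩ hg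
  weq_retract := fun ⟨i, r, hir⟩ hg => M.weq_retract
    ⟨(Under.forget X).mapArrow.map i, (Under.forget X).mapArrow.map r,
      by erw [← CategoryTheory.Functor.map_comp, hir, CategoryTheory.Functor.map_id]; rfl⟩ hg
  lifting_cof_trivFib i p hi hp hp' := by
    constructor
    intro f g sq
    haveI := M.lifting_cof_trivFib i.right p.right hi hp hp'
    have sq' : CommSq f.right i.right p.right g.right :=
      ⟨by rw [← Under.comp_right, sq.w, Under.comp_right]⟩
    exact ⟨⟨⟨Under.homMk sq'.lift (by
        rw [← Under.w i, Category.assoc, sq'.fac_left, Under.w f]),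
      by ext; exact sq'.fac_left, by ext; exact sq'.fac_right⟩⟩⟩
  lifting_trivCof_fib i p hi hi' hp := by
    constructor
    intro f g sq
    haveI := M.lifting_trivCof_fib i.right p.right hi hi' hp
    have sq' : CommSq f.right i.right p.right g.right :=
      ⟨by rw [← Under.comp_right, sq.w, Under.comp_right]⟩
    exact ⟨⟨⟨Under.homMk sq'.lift (by
        rw [← Under.w i, Category.assoc, sq'.fac_left, Under.w f]),
      by ext; exact sq'.fac_left, by ext; exact sq'.fac_right⟩⟩⟩
  factor_cof_trivFib {A B} f := by
    obtain ⟨Z, i, p, hi, hp, hp', hfac⟩ := M.factor_cof_trivFib f.right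
    exact ⟨Under.mk (A.hom ≫ i), Under.homMk i rfl,
      Under.homMk p (by rw [show (Under.mk (A.hom ≫ i)).hom = A.hom ≫ i from rfl, Category.assoc, hfac, Under.w f]),
      hi, hp, hp', by ext; exact hfac⟩
  factor_trivCof_fib {A B} f := by
    obtain ⟨Z, i, p, hi, hi', hp, hfac⟩ := M.factor_trivCof_fib f.right
    exact ⟨Under.mk (A.hom ≫ i), Under.homMk i rfl,
      Under.homMk p (by rw [show (Under.mk (A.hom ≫ i)).hom = A.hom ≫ i from rfl, Category.assoc, hfac, Under.w f]),
      hi, hi', hp, by ext; exact hfac⟩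

/-- The induced model structure on the slice category `(C ↓ X)`: a morphism is a
cofibration, fibration or weak equivalence iff its underlying morphism in `C` is one. -/
def ModelStruct.over (M : ModelStruct C) (X : C) : ModelStruct (Over X) where
  cof _ _ f := M.cof f.left
  fib _ _ f := M.fib f.left
  weq _ _ f := M.weq f.left
  weq_comp f g hf hg := by simpa using M.weq_comp f.left g.left hf hg
  weq_cancel_left f g hf hfg := M.weq_cancel_left f.left g.left hf (by simpa using hfg)
  weq_cancel_right f g hg hfg := M.weq_cancel_right f.left g.left hg (by simpa using hfg)
  cof_retract := fun ⟨i, r, hir⟩ hg => M.cof_retract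
    ⟨(Over.forget X).mapArrow.map i, (Over.forget X).mapArrow.map r,
      by erw [← CategoryTheory.Functor.map_comp, hir, CategoryTheory.Functor.map_id]; rfl⟩ hg
  fib_retract := fun ⟨i, r, hir⟩ hg => M.fib_retract
    ⟨(Over.forget X).mapArrow.map i, (Over.forget X).mapArrow.map r,
      by erw [← CategoryTheory.Functor.map_comp, hir, CategoryTheory.Functor.map_id]; rfl⟩ hg
  weq_retract := fun ⟨i, r, hir⟩ hg => M.weq_retract
    ⟨(Over.forget X).mapArrow.map i, (Over.forget X).mapArrow.map r,
      by erw [← CategoryTheory.Functor.map_comp, hir, CategoryTheory.Functor.map_id]; rfl⟩ hg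
  lifting_cof_trivFib i p hi hp hp' := by
    constructor
    intro f g sq
    haveI := M.lifting_cof_trivFib i.left p.left hi hp hp'
    have sq' : CommSq f.left i.left p.left g.left :=
      ⟨by rw [← Over.comp_left, sq.w, Over.comp_left]⟩
    exact ⟨⟨⟨Over.homMk sq'.lift (by
        rw [← Over.w p, ← Category.assoc, sq'.fac_right, Over.w g]),
      by ext; exact sq'.fac_left, by ext; exact sq'.fac_right⟩⟩⟩
  lifting_trivCof_fib i p hi hi' hp := by
    constructor
    intro f g sq
    haveI := M.lifting_trivCof_fib i.left p.left hi hi' hp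
    have sq' : CommSq f.left i.left p.left g.left :=
      ⟨by rw [← Over.comp_left, sq.w, Over.comp_left]⟩
    exact ⟨⟨⟨Over.homMk sq'.lift (by
        rw [← Over.w p, ← Category.assoc, sq'.fac_right, Over.w g]),
      by ext; exact sq'.fac_left, by ext; exact sq'.fac_right⟩⟩⟩
  factor_cof_trivFib {A B} f := by
    obtain ⟨Z, i, p, hi, hp, hp', hfac⟩ := M.factor_cof_trivFib f.left
    exact ⟨Over.mk (p ≫ B.hom), Over.homMk i (by rw [show (Over.mk (p ≫ B.hom)).hom = p ≫ B.hom from rfl, ← Category.assoc, hfac, Over.w f]),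
      Over.homMk p rfl, hi, hp, hp', by ext; exact hfac⟩
  factor_trivCof_fib {A B} f := by
    obtain ⟨Z, i, p, hi, hi', hp, hfac⟩ := M.factor_trivCof_fib f.left
    exact ⟨Over.mk (p ≫ B.hom), Over.homMk i (by rw [show (Over.mk (p ≫ B.hom)).hom = p ≫ B.hom from rfl, ← Category.assoc, hfac, Over.w f]),
      Over.homMk p rfl, hi, hi', hp, by ext; exact hfac⟩

noncomputable instance (X : C) : HasInitial (Under X) :=
  Under.mkIdInitial.hasInitial

noncomputable instance (X : C) : HasTerminal (Over X) :=
  Over.mkIdTerminal.hasTerminal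

/-- The terminal object of `(X ↓ C)` is `X ⟶ *`. -/
noncomputable def underMkTerminal [HasTerminal C] (X : C) :
    IsTerminal (Under.mk (terminal.from X)) :=
  IsTerminal.ofUniqueHom (fun u => Under.homMk (terminal.from u.right)
      (terminal.hom_ext _ _))
    (fun u m => by ext; exact terminal.hom_ext _ _)

noncomputable instance [HasTerminal C] (X : C) : HasTerminal (Under X) :=
  (underMkTerminal X).hasTerminal

/-- The initial object of `(C ↓ X)` is `∅ ⟶ X`. -/
noncomputable def overMkInitial [HasInitial C] (X : C) :
    IsInitial (Over.mk (initial.to X)) :=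
  IsInitial.ofUniqueHom (fun u => Over.homMk (initial.to u.left)
      (initial.hom_ext _ _))
    (fun u m => by ext; exact initial.hom_ext _ _)

noncomputable instance [HasInitial C] (X : C) : HasInitial (Over X) :=
  (overMkInitial X).hasInitial

/-- A Quillen adjunction between model categories: an adjoint pair whose left adjoint
preserves cofibrations and acyclic cofibrations. -/
structure QuillenAdjunction {C : Type u} [Category.{v} C] {D : Type u'} [Category.{v'} D]
    (M : ModelStruct C) (N : ModelStruct D) (F : C ⥤ D) (G : D ⥤ C) where
  adj : F ⊣ G
  map_cof : ∀ {A B : C} (f : A ⟶ B), M.cof f → N.cof (F.map f)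
  map_trivCof_weq : ∀ {A B : C} (f : A ⟶ B), M.cof f → M.weq f → N.weq (F.map f)

/-- A Quillen adjunction is a Quillen equivalence if for every cofibrant `A` and fibrant `B`,
a map `F A ⟶ B` is a weak equivalence iff its adjunct `A ⟶ G B` is. -/
def IsQuillenEquivalence {C : Type u} [Category.{v} C] {D : Type u'} [Category.{v'} D]
    [HasInitial C] [HasTerminal D]
    (M : ModelStruct C) (N : ModelStruct D) {F : C ⥤ D} {G : D ⥤ C} (adj : F ⊣ G) : Prop :=
  ∀ (A : C) (B : D), M.Cofibrant A → N.Fibrant B →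
    ∀ f : F.obj A ⟶ B, N.weq f ↔ M.weq ((adj.homEquiv A B) f)


/-- A closed model category is right proper if every base change of a weak equivalence along
a fibration is a weak equivalence. -/
def ModelStruct.RightProper {C : Type u} [Category.{v} C] [HasPullbacks C]
    (M : ModelStruct C) : Prop :=
  ∀ {X Y Z : C} (g : X ⟶ Y) (u : Z ⟶ Y), M.weq g → M.fib u → M.weq (pullback.snd g u)


/-- If two arrows are isomorphic (via a commuting square of isomorphisms), each is a
retract of the other. -/
lemma isRetractOfArrow_of_iso {D : Type u'} [Category.{v'} D] {A B A' B' : D}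
    {f : A ⟶ B} {g : A' ⟶ B'} (eA : A ≅ A') (eB : B ≅ B')
    (h : eA.hom ≫ g = f ≫ eB.hom) : IsRetractOfArrow f g := by
  refine ⟨Arrow.homMk (u := eA.hom) (v := eB.hom) h,
    Arrow.homMk (u := eA.inv) (v := eB.inv) ?_, ?_⟩
  · show eA.inv ≫ f = g ≫ eB.inv
    rw [Iso.inv_comp_eq, ← Category.assoc, h, Category.assoc, Iso.hom_inv_id,
      Category.comp_id]
  · ext <;> simp

/-- The structure map of the terminal object of `Over Y` is an isomorphism. -/
lemma isIso_terminal_over_hom (Y : C) : IsIso (⊤_ (Over Y)).hom := by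
  let e : (⊤_ (Over Y)) ≅ Over.mk (𝟙 Y) := terminalIsTerminal.uniqueUpToIso Over.mkIdTerminal
  have ht : (⊤_ (Over Y)).hom = e.hom.left := by simpa using (Over.w e.hom).symm
  have : e.hom.left = (Over.forget Y).map e.hom := rfl
  rw [ht, this]
  exact ((Over.forget Y).mapIso e).isIso_hom

/-- An object of `Over Y` is fibrant iff its structure map is a fibration. -/
lemma fibrant_over_iff (M : ModelStruct C) (Y : C) (B : Over Y) :
    (M.over Y).Fibrant B ↔ M.fib B.hom := by
  haveI := isIso_terminal_over_hom (C := C) Y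
  set t := (⊤_ (Over Y)).hom
  have hw : (terminal.from B).left ≫ t = B.hom := Over.w _
  constructor
  · intro h
    exact M.fib_retract (isRetractOfArrow_of_iso (Iso.refl B.left) (asIso t).symm
      (by simp [← hw])) h
  · intro h
    exact M.fib_retract (isRetractOfArrow_of_iso (Iso.refl B.left) (asIso t)
      (by simp [hw])) h

/-- **Statement 15.** A closed model category `C` is right proper if and only if
`(g_*, g^!) : (C ↓ X) → (C ↓ Y)` is a Quillen equivalence for every weak equivalence
`g : X ⟶ Y`. -/
theorem right_proper_iff {C : Type u} [Category.{v} C]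
    [HasLimits C] [HasColimits C] (M : ModelStruct C) :
    M.RightProper ↔
      ∀ {X Y : C} (g : X ⟶ Y), M.weq g →
        IsQuillenEquivalence (M.over X) (M.over Y) (Over.mapPullbackAdj g) := by
  constructor
  · -- right proper ⇒ Quillen equivalence
    intro hRP X Y g hg A B _ hB f
    have hfib : M.fib B.hom := (fibrant_over_iff M Y B).mp hB
    -- the base change of `g` along the fibration `B.hom` is a weak equivalence
    have hq : M.weq (pullback.fst B.hom g) := by
      refine M.weq_retract (isRetractOfArrow_of_iso (pullbackSymmetry B.hom g)
        (Iso.refl B.left) (by simp)) (hRP g B.hom hg hfib)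
    have key : (((Over.mapPullbackAdj g).homEquiv A B) f).left ≫ pullback.fst B.hom g
        = f.left := by
      simp [Over.mapPullbackAdj, Adjunction.mkOfHomEquiv_homEquiv]
      erw [pullback.lift_fst]
    show M.weq f.left ↔ M.weq (((Over.mapPullbackAdj g).homEquiv A B) f).left
    constructor
    · intro hf
      exact M.weq_cancel_right _ _ hq (by rwa [key])
    · intro hf
      have := M.weq_comp _ _ hf hq
      rwa [key] at this
  · -- Quillen equivalence ⇒ right proper
    intro H X Y Z g u hg hu
    set B : Over Y := Over.mk u with hBdef
    have hB : (M.over Y).Fibrant B := (fibrant_over_iff M Y B).mpr hu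
    set P : Over X := (Over.pullback g).obj B with hPdef
    obtain ⟨A, i, p, hi, hp, hpw, -⟩ := (M.over X).factor_cof_trivFib (initial.to P)
    have hA : (M.over X).Cofibrant A := by
      show (M.over X).cof (initial.to A)
      rw [show initial.to A = i from initial.hom_ext _ _]
      exact hi
    set f : (Over.map g).obj A ⟶ B := ((Over.mapPullbackAdj g).homEquiv A B).symm p
      with hfdef
    have hiff := H g hg A B hA hB f
    rw [hfdef, Equiv.apply_symm_apply] at hiff
    have hf : M.weq f.left := hiff.mpr hpw
    have hfeq : f.left = p.left ≫ pullback.fst B.hom g := by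
      rw [hfdef, Adjunction.homEquiv_counit]
      simp
    have hfst : M.weq (pullback.fst B.hom g) :=
      M.weq_cancel_left p.left _ hpw (by rwa [hfeq] at hf)
    exact M.weq_retract (isRetractOfArrow_of_iso (pullbackSymmetry g u) (Iso.refl Z)
      (by
        show (pullbackSymmetry g u).hom ≫ pullback.fst u g = pullback.snd g u ≫ (Iso.refl Z).hom
        simp)) hfst
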